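/- arXiv:0901.2290 — 2 statements merged into one kernel-verified Lean document; each statement's English description precedes it below -/
import Mathlib

section
/- Let ν : ℝ³ → ℝ be given by ν(v) = ∫_{ℝ³} |v-u|^γ μ(u) du with -3 < γ ≤ 1 and μ(u) = ρ(2πT)^{-3/2}exp(-|u-𝔲|²/(2T)), ρ, T > 0. Then there exist constants 0 < c ≤ C (depending on ρ, T, 𝔲, γ) such that c(1+|v|)^γ ≤ ν(v) ≤ C(1+|v|)^γ for all v ∈ ℝ³. -/
open MeasureTheory Real Metric Set
open scoped ENNReal NNReal

local notation "E3" => EuclideanSpace ℝ (Fin 3)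


lemma polyExpBound (T : ℝ) (hT : 0 < T) (b : ℝ) (hb : 0 ≤ b) (n : ℕ) :
    ∃ K : ℝ, 0 < K ∧ ∀ s : ℝ, 0 ≤ s →
      (1 + s) ^ n * Real.exp (-(max 0 ((s - b) / 2)) ^ 2 / (2 * T)) ≤ K := by
  refine ⟨(3 + b) ^ n * ((2 * T * n) ^ n + 1), by positivity, fun s hs => ?_⟩
  rcases le_or_gt s (b + 2) with hsb | hsb
  · have h1 : Real.exp (-(max 0 ((s - b) / 2)) ^ 2 / (2 * T)) ≤ 1 := by
      rw [Real.exp_le_one_iff]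
      have : (0:ℝ) ≤ (max 0 ((s - b) / 2)) ^ 2 := sq_nonneg _
      have h2T : (0:ℝ) < 2 * T := by linarith
      rw [div_nonpos_iff]; right; constructor <;> [linarith; linarith]
    calc (1 + s) ^ n * Real.exp (-(max 0 ((s - b) / 2)) ^ 2 / (2 * T))
        ≤ (1 + s) ^ n * 1 := by
          apply mul_le_mul_of_nonneg_left h1 (by positivity)
      _ = (1 + s) ^ n := mul_one _
      _ ≤ (3 + b) ^ n := by apply pow_le_pow_left₀ (by linarith) (by linarith)
      _ ≤ (3 + b) ^ n * ((2 * T * n) ^ n + 1) := by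
          nth_rewrite 1 [← mul_one ((3 + b) ^ n)]
          apply mul_le_mul_of_nonneg_left _ (by positivity)
          have : (0:ℝ) ≤ (2 * T * n) ^ n := by positivity
          linarith
  · set d : ℝ := (s - b) / 2 with hd
    have hd1 : 1 ≤ d := by rw [hd]; linarith [hsb]
    have hmax : max 0 d = d := max_eq_right (by linarith)
    rw [hmax]
    set x : ℝ := d ^ 2 / (2 * T) with hx
    have hxpos : 0 ≤ x := by positivity
    -- exp x ≥ (d^2/(2Tn))^n  when n ≥ 1; also handle n = 0
    have key : (d ^ 2) ^ n ≤ (2 * T * n) ^ n * Real.exp x ∨ n = 0 := by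
      rcases Nat.eq_zero_or_pos n with h0 | hn
      · right; exact h0
      · left
        have hn' : (0:ℝ) < n := by exact_mod_cast hn
        have h2Tn : (0:ℝ) < 2 * T * n := by positivity
        have step : d ^ 2 / (2 * T * n) ≤ Real.exp (d ^ 2 / (2 * T * n)) := by
          linarith [Real.add_one_le_exp (d ^ 2 / (2 * T * n))]
        have step2 : (d ^ 2 / (2 * T * n)) ^ n ≤ Real.exp (d ^ 2 / (2 * T * n)) ^ n :=
          pow_le_pow_left₀ (by positivity) step n
        have step3 : Real.exp (d ^ 2 / (2 * T * n)) ^ n = Real.exp x := by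
          rw [← Real.exp_nat_mul, hx]
          congr 1
          field_simp
        calc (d ^ 2) ^ n = (d ^ 2 / (2 * T * n)) ^ n * (2 * T * n) ^ n := by
              rw [← mul_pow]; congr 1; field_simp
          _ ≤ Real.exp x * (2 * T * n) ^ n := by
              apply mul_le_mul_of_nonneg_right _ (by positivity)
              rw [← step3]; exact step2
          _ = (2 * T * n) ^ n * Real.exp x := mul_comm _ _
    have hexp : Real.exp (-d ^ 2 / (2 * T)) = (Real.exp x)⁻¹ := by
      rw [hx, ← Real.exp_neg]; congr 1; ring
    rw [hexp]
    rw [mul_inv_le_iff₀ (Real.exp_pos x)]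
    rcases key with key | h0
    · calc (1 + s) ^ n ≤ ((3 + b) * d) ^ n := by
            apply pow_le_pow_left₀ (by linarith)
            nlinarith
        _ = (3 + b) ^ n * d ^ n := mul_pow _ _ _
        _ ≤ (3 + b) ^ n * (d ^ 2) ^ n := by
            apply mul_le_mul_of_nonneg_left _ (by positivity)
            apply pow_le_pow_left₀ (by linarith)
            nlinarith
        _ ≤ (3 + b) ^ n * ((2 * T * n) ^ n * Real.exp x) := by
            apply mul_le_mul_of_nonneg_left key (by positivity)
        _ ≤ (3 + b) ^ n * ((2 * T * n) ^ n + 1) * Real.exp x := by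
            have h1 : (0:ℝ) ≤ (3 + b) ^ n := by positivity
            have h2 : (0:ℝ) < Real.exp x := Real.exp_pos x
            nlinarith [pow_nonneg (by positivity : (0:ℝ) ≤ 2 * T * n) n]
    · subst h0
      simp only [pow_zero, one_mul]
      linarith [Real.exp_pos x, Real.one_le_exp hxpos]


lemma rpow_ball_bound (γ : ℝ) (hγ1 : -3 < γ) (hγ0 : γ < 0) :
    ∃ J : ℝ, 0 ≤ J ∧ ∀ v : E3, IntegrableOn (fun u => ‖v - u‖ ^ γ) (ball v 1) volume ∧
      (∫ u in ball v 1, ‖v - u‖ ^ γ) ≤ J := by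
  set B : ℝ≥0∞ := volume (ball (0 : E3) 1) with hB
  have hBlt : B < ⊤ := measure_ball_lt_top
  have hs3 : γ⁻¹ * 3 < -1 := by
    rw [show γ⁻¹ * 3 = 3 / γ by ring, div_lt_iff_of_neg hγ0]; linarith
  set I1 : ℝ≥0∞ := ∫⁻ t in Ioi (1:ℝ), ENNReal.ofReal (t ^ (γ⁻¹ * 3)) with hI1
  have hI1lt : I1 < ⊤ := (integrableOn_Ioi_rpow_of_lt hs3 one_pos).setLIntegral_lt_top
  set Jtop : ℝ≥0∞ := B + I1 * B with hJtop
  have hJlt : Jtop < ⊤ := ENNReal.add_lt_top.2 ⟨hBlt, ENNReal.mul_lt_top hI1lt hBlt⟩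
  -- main lintegral bound
  have main : ∀ v : E3, (∫⁻ u in ball v 1, ENNReal.ofReal (‖v - u‖ ^ γ)) ≤ Jtop := by
    intro v
    have hmeas : Measurable (fun u : E3 => ‖v - u‖ ^ γ) := by fun_prop
    have hnn : 0 ≤ᶠ[ae (volume.restrict (ball v 1))] fun u : E3 => ‖v - u‖ ^ γ :=
      Filter.Eventually.of_forall fun u => Real.rpow_nonneg (norm_nonneg _) _
    rw [lintegral_eq_lintegral_meas_le (volume.restrict (ball v 1)) hnn hmeas.aemeasurable]
    have hsetm : ∀ t : ℝ, MeasurableSet {a : E3 | t ≤ ‖v - a‖ ^ γ} :=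
      fun t => measurableSet_le measurable_const hmeas
    have hsub : ∀ t : ℝ, 1 < t →
        {a : E3 | t ≤ ‖v - a‖ ^ γ} ⊆ closedBall v (t ^ γ⁻¹) := by
      intro t ht a ha
      simp only [mem_setOf_eq] at ha
      have hva : ‖v - a‖ ≠ 0 := by
        intro h0
        rw [h0, Real.zero_rpow (ne_of_lt hγ0)] at ha
        linarith
      have hvapos : 0 < ‖v - a‖ := lt_of_le_of_ne (norm_nonneg _) (Ne.symm hva)
      have hinv : γ⁻¹ ≤ 0 := le_of_lt (inv_neg''.2 hγ0)
      have h2 := Real.rpow_le_rpow_of_nonpos (by linarith : (0:ℝ) < t) ha hinv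
      have h3 : (‖v - a‖ ^ γ) ^ γ⁻¹ = ‖v - a‖ := by
        rw [← Real.rpow_mul (norm_nonneg _), mul_inv_cancel₀ (ne_of_lt hγ0),
          Real.rpow_one]
      rw [h3] at h2
      rw [mem_closedBall, dist_comm, dist_eq_norm]
      exact h2
    calc ∫⁻ t in Ioi (0:ℝ), (volume.restrict (ball v 1)) {a : E3 | t ≤ ‖v - a‖ ^ γ}
        ≤ ∫⁻ t in Ioc (0:ℝ) 1 ∪ Ioi 1, (volume.restrict (ball v 1)) {a : E3 | t ≤ ‖v - a‖ ^ γ} :=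
          lintegral_mono_set Ioi_subset_Ioc_union_Ioi
      _ ≤ (∫⁻ t in Ioc (0:ℝ) 1, (volume.restrict (ball v 1)) {a : E3 | t ≤ ‖v - a‖ ^ γ}) +
          ∫⁻ t in Ioi (1:ℝ), (volume.restrict (ball v 1)) {a : E3 | t ≤ ‖v - a‖ ^ γ} :=
          lintegral_union_le _ _ _
      _ ≤ B + I1 * B := by
          gcongr
          · -- Ioc part ≤ B
            calc ∫⁻ t in Ioc (0:ℝ) 1, (volume.restrict (ball v 1)) {a : E3 | t ≤ ‖v - a‖ ^ γ}
                ≤ ∫⁻ _t in Ioc (0:ℝ) 1, B := by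
                  refine setLIntegral_mono' measurableSet_Ioc fun t _ => ?_
                  calc (volume.restrict (ball v 1)) {a : E3 | t ≤ ‖v - a‖ ^ γ}
                      ≤ (volume.restrict (ball v 1)) univ := measure_mono (subset_univ _)
                    _ = volume (ball v 1) := by rw [Measure.restrict_apply_univ]
                    _ = B := by rw [hB, Measure.addHaar_ball_center]
              _ = B * volume (Ioc (0:ℝ) 1) := setLIntegral_const _ _
              _ = B := by rw [Real.volume_Ioc]; norm_num
          · -- Ioi part ≤ I1 * B
            calc ∫⁻ t in Ioi (1:ℝ), (volume.restrict (ball v 1)) {a : E3 | t ≤ ‖v - a‖ ^ γ}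
                ≤ ∫⁻ t in Ioi (1:ℝ), ENNReal.ofReal (t ^ (γ⁻¹ * 3)) * B := by
                  refine setLIntegral_mono' measurableSet_Ioi fun t ht => ?_
                  have ht1 : (1:ℝ) < t := ht
                  have htpos : (0:ℝ) < t := by linarith
                  calc (volume.restrict (ball v 1)) {a : E3 | t ≤ ‖v - a‖ ^ γ}
                      ≤ volume {a : E3 | t ≤ ‖v - a‖ ^ γ} := Measure.restrict_le_self _
                    _ ≤ volume (closedBall v (t ^ γ⁻¹)) := measure_mono (hsub t ht1)
                    _ = ENNReal.ofReal ((t ^ γ⁻¹) ^ Module.finrank ℝ E3) * B := by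
                        rw [hB, Measure.addHaar_closedBall _ _ (Real.rpow_nonneg htpos.le _)]
                    _ = ENNReal.ofReal (t ^ (γ⁻¹ * 3)) * B := by
                        congr 2
                        have : Module.finrank ℝ E3 = 3 := by simp
                        rw [this, ← Real.rpow_natCast (t ^ γ⁻¹) 3, ← Real.rpow_mul htpos.le]
                        norm_num
              _ = I1 * B := lintegral_mul_const' B _ hBlt.ne
  refine ⟨Jtop.toReal, ENNReal.toReal_nonneg, fun v => ?_⟩
  have hmeas : Measurable (fun u : E3 => ‖v - u‖ ^ γ) := by fun_prop
  have hnn : 0 ≤ᶠ[ae (volume.restrict (ball v 1))] fun u : E3 => ‖v - u‖ ^ γ :=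
    Filter.Eventually.of_forall fun u => Real.rpow_nonneg (norm_nonneg _) _
  have hint : IntegrableOn (fun u => ‖v - u‖ ^ γ) (ball v 1) volume := by
    refine ⟨hmeas.aestronglyMeasurable.restrict, ?_⟩
    rw [hasFiniteIntegral_iff_norm]
    have heq : ∀ u : E3, ENNReal.ofReal ‖‖v - u‖ ^ γ‖ = ENNReal.ofReal (‖v - u‖ ^ γ) := by
      intro u; rw [Real.norm_of_nonneg (Real.rpow_nonneg (norm_nonneg _) _)]
    calc (∫⁻ u in ball v 1, ENNReal.ofReal ‖‖v - u‖ ^ γ‖)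
        = ∫⁻ u in ball v 1, ENNReal.ofReal (‖v - u‖ ^ γ) := by
          exact lintegral_congr fun u => heq u
      _ ≤ Jtop := main v
      _ < ⊤ := hJlt
  refine ⟨hint, ?_⟩
  rw [integral_eq_lintegral_of_nonneg_ae hnn hmeas.aestronglyMeasurable.restrict]
  exact ENNReal.toReal_mono hJlt.ne (main v)


lemma expMono {T : ℝ} (hT : 0 < T) {x y : ℝ} (hy : 0 ≤ y) (hyx : y ≤ x) :
    Real.exp (-x ^ 2 / (2 * T)) ≤ Real.exp (-y ^ 2 / (2 * T)) := by
  apply Real.exp_le_exp.2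
  have h2T : (0:ℝ) < 2 * T := by linarith
  rw [div_le_div_iff₀ h2T h2T]
  nlinarith [mul_le_mul hyx hyx hy (hy.trans hyx), hT]

section majorant
variable (ρ T : ℝ) (𝔲 : E3)

lemma gauss_majorant (hρ : 0 < ρ) (hT : 0 < T) :
    Integrable (fun u : E3 =>
      (1 + ‖u‖) * (ρ * (2 * π * T) ^ (-(3:ℝ) / 2) * Real.exp (-‖u - 𝔲‖ ^ 2 / (2 * T))))
      volume := by
  set a : ℝ := ρ * (2 * π * T) ^ (-(3:ℝ) / 2) with ha
  have hapos : 0 < a := by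
    apply mul_pos hρ
    apply Real.rpow_pos_of_pos
    have := Real.pi_pos
    positivity
  obtain ⟨K, hKpos, hK⟩ := polyExpBound T hT (2 * ‖𝔲‖) (by positivity) 5
  have hfin : (Module.finrank ℝ E3 : ℝ) < 4 := by simp; norm_num
  have hM : Integrable (fun u : E3 => a * K * (1 + ‖u‖) ^ (-(4:ℝ))) volume :=
    (integrable_one_add_norm hfin).const_mul _
  apply hM.mono' ?_ ?_
  · apply Measurable.aestronglyMeasurable
    fun_prop
  · refine Filter.Eventually.of_forall fun u => ?_
    set s := ‖u‖ with hs
    have hs0 : 0 ≤ s := norm_nonneg _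
    have hexple : Real.exp (-‖u - 𝔲‖ ^ 2 / (2 * T)) ≤
        Real.exp (-(max 0 ((s - 2 * ‖𝔲‖) / 2)) ^ 2 / (2 * T)) := by
      apply expMono hT (le_max_left _ _)
      rcases le_or_gt ((s - 2 * ‖𝔲‖) / 2) 0 with h | h
      · rw [max_eq_left h]; exact norm_nonneg _
      · rw [max_eq_right h.le]
        have : s - ‖𝔲‖ ≤ ‖u - 𝔲‖ := by
          have := norm_sub_norm_le u 𝔲
          linarith
        linarith
    have h5 : (1 + s) ^ 5 * Real.exp (-‖u - 𝔲‖ ^ 2 / (2 * T)) ≤ K := by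
      calc (1 + s) ^ 5 * Real.exp (-‖u - 𝔲‖ ^ 2 / (2 * T))
          ≤ (1 + s) ^ 5 * Real.exp (-(max 0 ((s - 2 * ‖𝔲‖) / 2)) ^ 2 / (2 * T)) := by
            apply mul_le_mul_of_nonneg_left hexple (by positivity)
        _ ≤ K := hK s hs0
    rw [Real.norm_of_nonneg (by positivity)]
    have hrpow : (1 + s) ^ (-(4:ℝ)) = ((1 + s) ^ (4:ℕ))⁻¹ := by
      rw [Real.rpow_neg (by linarith), ← Real.rpow_natCast (1 + s) 4]
      norm_num
    rw [hrpow, ← div_eq_mul_inv, le_div_iff₀ (by positivity)]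
    calc (1 + s) * (a * Real.exp (-‖u - 𝔲‖ ^ 2 / (2 * T))) * (1 + s) ^ 4
        = a * ((1 + s) ^ 5 * Real.exp (-‖u - 𝔲‖ ^ 2 / (2 * T))) := by ring
      _ ≤ a * K := mul_le_mul_of_nonneg_left h5 hapos.le

end majorant

section integrab
open MeasureTheory Real Metric Set Filter
variable (γ ρ T : ℝ) (𝔲 : EuclideanSpace ℝ (Fin 3))

lemma nu_integrable (hγ1 : -3 < γ) (hγ2 : γ ≤ 1) (hρ : 0 < ρ) (hT : 0 < T)
    (v : EuclideanSpace ℝ (Fin 3)) :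
    Integrable (fun u : EuclideanSpace ℝ (Fin 3) =>
      ‖v - u‖ ^ γ * (ρ * (2 * π * T) ^ (-(3:ℝ) / 2) * Real.exp (-‖u - 𝔲‖ ^ 2 / (2 * T))))
      volume := by
  set a : ℝ := ρ * (2 * π * T) ^ (-(3:ℝ) / 2) with ha
  have hapos : 0 < a := by
    apply mul_pos hρ
    apply Real.rpow_pos_of_pos
    have := Real.pi_pos
    positivity
  set μf : EuclideanSpace ℝ (Fin 3) → ℝ := fun u => a * Real.exp (-‖u - 𝔲‖ ^ 2 / (2 * T))
    with hμf
  have hμpos : ∀ u, 0 < μf u := fun u => mul_pos hapos (Real.exp_pos _)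
  have hμle : ∀ u, μf u ≤ a := by
    intro u
    have : Real.exp (-‖u - 𝔲‖ ^ 2 / (2 * T)) ≤ 1 := by
      rw [Real.exp_le_one_iff]
      have h1 : (0:ℝ) ≤ ‖u - 𝔲‖ ^ 2 := sq_nonneg _
      have h2 : (0:ℝ) < 2 * T := by linarith
      rw [div_nonpos_iff]; right; exact ⟨by linarith, by linarith⟩
    calc μf u = a * Real.exp (-‖u - 𝔲‖ ^ 2 / (2 * T)) := rfl
      _ ≤ a * 1 := by apply mul_le_mul_of_nonneg_left this hapos.le
      _ = a := mul_one a
  have hg : Integrable (fun u : EuclideanSpace ℝ (Fin 3) => (1 + ‖u‖) * μf u) volume :=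
    gauss_majorant ρ T 𝔲 hρ hT
  have hμint : Integrable μf volume := by
    apply hg.mono' (by apply Measurable.aestronglyMeasurable; fun_prop)
    refine Eventually.of_forall fun u => ?_
    rw [Real.norm_of_nonneg (hμpos u).le]
    nlinarith [hμpos u, norm_nonneg u]
  have hfmeas : Measurable (fun u : EuclideanSpace ℝ (Fin 3) => ‖v - u‖ ^ γ * μf u) := by
    fun_prop
  show Integrable (fun u => ‖v - u‖ ^ γ * μf u) volume
  rcases lt_or_ge γ 0 with hγ0 | hγ0
  · -- singular case
    obtain ⟨J, hJ0, hJ⟩ := rpow_ball_bound γ hγ1 hγ0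
    have h1 : IntegrableOn (fun u => ‖v - u‖ ^ γ * μf u) (ball v 1) volume := by
      apply ((hJ v).1.mul_const a).mono' hfmeas.aestronglyMeasurable.restrict
      refine Eventually.of_forall fun u => ?_
      have hfnn : 0 ≤ ‖v - u‖ ^ γ * μf u :=
        mul_nonneg (Real.rpow_nonneg (norm_nonneg _) _) (hμpos u).le
      rw [Real.norm_of_nonneg hfnn]
      exact mul_le_mul_of_nonneg_left (hμle u) (Real.rpow_nonneg (norm_nonneg _) _)
    have h2 : IntegrableOn (fun u => ‖v - u‖ ^ γ * μf u) (ball v 1)ᶜ volume := by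
      apply hμint.integrableOn.mono' hfmeas.aestronglyMeasurable.restrict
      rw [ae_restrict_iff' measurableSet_ball.compl]
      refine Eventually.of_forall fun u hu => ?_
      have hd : (1:ℝ) ≤ ‖v - u‖ := by
        simp only [mem_compl_iff, mem_ball, not_lt] at hu
        calc (1:ℝ) ≤ dist u v := hu
          _ = ‖v - u‖ := by rw [dist_comm, dist_eq_norm]
      have hr1 : ‖v - u‖ ^ γ ≤ 1 :=
        Real.rpow_le_one_of_one_le_of_nonpos hd hγ0.le
      have hfnn : 0 ≤ ‖v - u‖ ^ γ * μf u :=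
        mul_nonneg (Real.rpow_nonneg (norm_nonneg _) _) (hμpos u).le
      rw [Real.norm_of_nonneg hfnn]
      calc ‖v - u‖ ^ γ * μf u ≤ 1 * μf u :=
            mul_le_mul_of_nonneg_right hr1 (hμpos u).le
        _ = μf u := one_mul _
    have := (h1.union h2).mono_set (by rw [union_compl_self] : Set.univ ⊆ ball v 1 ∪ (ball v 1)ᶜ)
    exact integrableOn_univ.mp this
  · -- mild case
    apply (hg.const_mul ((1 + ‖v‖) ^ γ)).mono' hfmeas.aestronglyMeasurable
    refine Eventually.of_forall fun u => ?_
    have hfnn : 0 ≤ ‖v - u‖ ^ γ * μf u :=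
      mul_nonneg (Real.rpow_nonneg (norm_nonneg _) _) (hμpos u).le
    rw [Real.norm_of_nonneg hfnn]
    have key : ‖v - u‖ ^ γ ≤ (1 + ‖v‖) ^ γ * (1 + ‖u‖) ^ γ := by
      rw [← Real.mul_rpow (by positivity) (by positivity)]
      apply Real.rpow_le_rpow (norm_nonneg _) _ hγ0
      have := norm_sub_le v u
      nlinarith [norm_nonneg v, norm_nonneg u]
    have h2 : (1 + ‖u‖) ^ γ ≤ 1 + ‖u‖ := by
      nth_rewrite 2 [← Real.rpow_one (1 + ‖u‖)]
      apply Real.rpow_le_rpow_of_exponent_le (by linarith [norm_nonneg u]) hγ2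
    calc ‖v - u‖ ^ γ * μf u ≤ ((1 + ‖v‖) ^ γ * (1 + ‖u‖) ^ γ) * μf u := by
          apply mul_le_mul_of_nonneg_right key (hμpos u).le
      _ ≤ (1 + ‖v‖) ^ γ * ((1 + ‖u‖) * μf u) := by
          rw [mul_assoc]
          apply mul_le_mul_of_nonneg_left _ (Real.rpow_nonneg (by positivity) _)
          apply mul_le_mul_of_nonneg_right h2 (hμpos u).le
end integrab

lemma min_rpow_le {l L x γ : ℝ} (hl : 0 < l) (h1 : l ≤ x) (h2 : x ≤ L) :
    min (l ^ γ) (L ^ γ) ≤ x ^ γ := by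
  rcases le_or_gt 0 γ with h | h
  · exact le_trans (min_le_left _ _) (Real.rpow_le_rpow hl.le h1 h)
  · exact le_trans (min_le_right _ _) (Real.rpow_le_rpow_of_nonpos (hl.trans_le h1) h2 h.le)

section lowersec
open MeasureTheory Real Metric Set Filter
variable (γ ρ T : ℝ) (𝔲 : EuclideanSpace ℝ (Fin 3))

set_option maxHeartbeats 1000000 in
lemma nu_lower (hγ1 : -3 < γ) (hγ2 : γ ≤ 1) (hρ : 0 < ρ) (hT : 0 < T) :
    ∃ c : ℝ, 0 < c ∧ ∀ v : EuclideanSpace ℝ (Fin 3),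
      c * (1 + ‖v‖) ^ γ ≤ ∫ u : EuclideanSpace ℝ (Fin 3),
        ‖v - u‖ ^ γ * (ρ * (2 * π * T) ^ (-(3:ℝ) / 2) * Real.exp (-‖u - 𝔲‖ ^ 2 / (2 * T))) := by
  set a : ℝ := ρ * (2 * π * T) ^ (-(3:ℝ) / 2) with ha
  have hapos : 0 < a := by
    apply mul_pos hρ
    apply Real.rpow_pos_of_pos
    have := Real.pi_pos
    positivity
  set μf : EuclideanSpace ℝ (Fin 3) → ℝ := fun u => a * Real.exp (-‖u - 𝔲‖ ^ 2 / (2 * T))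
    with hμf
  have hμpos : ∀ u, 0 < μf u := fun u => mul_pos hapos (Real.exp_pos _)
  set R : ℝ := ‖𝔲‖ + 1 with hR
  have hR1 : 1 ≤ R := by have := norm_nonneg 𝔲; rw [hR]; linarith
  have hRpos : 0 < R := by linarith
  set m : ℝ := a * Real.exp (-(8 * R) ^ 2 / (2 * T)) with hm
  have hmpos : 0 < m := mul_pos hapos (Real.exp_pos _)
  have hVbpos : 0 < (volume (closedBall (0 : EuclideanSpace ℝ (Fin 3)) 1)).toReal :=
    ENNReal.toReal_pos (measure_closedBall_pos volume _ one_pos).ne' measure_closedBall_lt_top.ne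
  set c1 : ℝ := (5 * R)⁻¹ with hc1
  have hc1pos : 0 < c1 := by rw [hc1]; positivity
  set c2 : ℝ := 11 * R with hc2
  have hc2pos : 0 < c2 := by rw [hc2]; positivity
  set m2 : ℝ := min (c1 ^ γ) (c2 ^ γ) with hm2
  have hm2pos : 0 < m2 :=
    lt_min (Real.rpow_pos_of_pos hc1pos _) (Real.rpow_pos_of_pos hc2pos _)
  refine ⟨m2 * m * (volume (closedBall (0 : EuclideanSpace ℝ (Fin 3)) 1)).toReal,
    by positivity, fun v => ?_⟩
  set s : ℝ := ‖v‖ with hs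
  have hs0 : 0 ≤ s := norm_nonneg v
  have hkey : ∃ w : EuclideanSpace ℝ (Fin 3), ‖w - 𝔲‖ ≤ 7 * R ∧
      ∀ u ∈ closedBall w 1, c1 * (1 + s) ≤ ‖v - u‖ ∧ ‖v - u‖ ≤ c2 * (1 + s) := by
    by_cases hbig : 4 * R ≤ s
    · refine ⟨𝔲, by simp only [sub_self, norm_zero]; positivity, fun u hu => ?_⟩
      have hu1 : ‖u - 𝔲‖ ≤ 1 := by rwa [mem_closedBall, dist_eq_norm] at hu
      have hunorm : ‖u‖ ≤ R := by
        calc ‖u‖ = ‖u - 𝔲 + 𝔲‖ := by rw [sub_add_cancel]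
          _ ≤ ‖u - 𝔲‖ + ‖𝔲‖ := norm_add_le _ _
          _ ≤ 1 + ‖𝔲‖ := by linarith
          _ = R := by rw [hR]; ring
      constructor
      · have hlow : s - R ≤ ‖v - u‖ := by
          have := norm_sub_norm_le v u
          rw [← hs] at this
          linarith
        have : c1 * (1 + s) ≤ s - R := by
          rw [hc1, inv_mul_le_iff₀ (by positivity)]
          nlinarith [mul_le_mul_of_nonneg_left hbig hRpos.le]
        linarith
      · have hup : ‖v - u‖ ≤ s + R := by
          have := norm_sub_le v u
          rw [← hs] at this
          linarith
        have : s + R ≤ c2 * (1 + s) := by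
          rw [hc2]
          nlinarith [mul_le_mul_of_nonneg_right hR1 hs0]
        linarith
    · push_neg at hbig
      set w : EuclideanSpace ℝ (Fin 3) := EuclideanSpace.single (0 : Fin 3) (6 * R) with hw
      have hwnorm : ‖w‖ = 6 * R := by
        rw [hw, EuclideanSpace.norm_single, Real.norm_eq_abs, abs_of_pos (by positivity)]
      refine ⟨w, ?_, fun u hu => ?_⟩
      · calc ‖w - 𝔲‖ ≤ ‖w‖ + ‖𝔲‖ := norm_sub_le _ _
          _ = 6 * R + (R - 1) := by rw [hwnorm, hR]; ring
          _ ≤ 7 * R := by linarith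
      · have hu1 : ‖u - w‖ ≤ 1 := by rwa [mem_closedBall, dist_eq_norm] at hu
        have hulow : 6 * R - 1 ≤ ‖u‖ := by
          have h1 : ‖w‖ - ‖u‖ ≤ ‖w - u‖ := norm_sub_norm_le w u
          have h2 : ‖w - u‖ = ‖u - w‖ := norm_sub_rev w u
          rw [hwnorm] at h1
          linarith
        have huup : ‖u‖ ≤ 6 * R + 1 := by
          calc ‖u‖ = ‖u - w + w‖ := by rw [sub_add_cancel]
            _ ≤ ‖u - w‖ + ‖w‖ := norm_add_le _ _
            _ ≤ 1 + 6 * R := by rw [hwnorm]; linarith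
            _ = 6 * R + 1 := by ring
        constructor
        · have hlow : 2 * R - 1 ≤ ‖v - u‖ := by
            have h1 : ‖u‖ - ‖v‖ ≤ ‖u - v‖ := norm_sub_norm_le u v
            have h2 : ‖u - v‖ = ‖v - u‖ := norm_sub_rev u v
            rw [← hs] at h1
            linarith
          have : c1 * (1 + s) ≤ 2 * R - 1 := by
            rw [hc1, inv_mul_le_iff₀ (by positivity)]
            nlinarith
          linarith
        · have hup : ‖v - u‖ ≤ s + (6 * R + 1) := by
            have := norm_sub_le v u
            rw [← hs] at this
            linarith
          have : s + (6 * R + 1) ≤ c2 * (1 + s) := by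
            rw [hc2]
            nlinarith [mul_le_mul_of_nonneg_right hR1 hs0]
          linarith
  obtain ⟨w, hw𝔲, hwball⟩ := hkey
  have hμlow : ∀ u ∈ closedBall w 1, m ≤ μf u := by
    intro u hu
    have hu1 : ‖u - w‖ ≤ 1 := by rwa [mem_closedBall, dist_eq_norm] at hu
    have hu𝔲 : ‖u - 𝔲‖ ≤ 8 * R := by
      calc ‖u - 𝔲‖ = ‖(u - w) + (w - 𝔲)‖ := by abel_nf
        _ ≤ ‖u - w‖ + ‖w - 𝔲‖ := norm_add_le _ _
        _ ≤ 1 + 7 * R := by linarith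
        _ ≤ 8 * R := by linarith
    rw [hm]
    exact mul_le_mul_of_nonneg_left (expMono hT (norm_nonneg _) hu𝔲) hapos.le
  have hflow : ∀ u ∈ closedBall w 1, m2 * (1 + s) ^ γ * m ≤ ‖v - u‖ ^ γ * μf u := by
    intro u hu
    obtain ⟨hl, hu2⟩ := hwball u hu
    have hmin : m2 * (1 + s) ^ γ ≤ ‖v - u‖ ^ γ := by
      have h1 : min ((c1 * (1 + s)) ^ γ) ((c2 * (1 + s)) ^ γ) ≤ ‖v - u‖ ^ γ :=
        min_rpow_le (by positivity) hl hu2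
      have h2 : m2 * (1 + s) ^ γ = min ((c1 * (1 + s)) ^ γ) ((c2 * (1 + s)) ^ γ) := by
        rw [Real.mul_rpow hc1pos.le (by positivity), Real.mul_rpow hc2pos.le (by positivity),
          hm2, min_mul_of_nonneg _ _ (Real.rpow_nonneg (by positivity) γ)]
      rw [h2]
      exact h1
    exact mul_le_mul hmin (hμlow u hu) hmpos.le (Real.rpow_nonneg (norm_nonneg _) _)
  have hint := nu_integrable γ ρ T 𝔲 hγ1 hγ2 hρ hT v
  have hintf : Integrable (fun u => ‖v - u‖ ^ γ * μf u) volume := hint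
  have hfnn : 0 ≤ᶠ[ae (volume : Measure (EuclideanSpace ℝ (Fin 3)))]
      fun u => ‖v - u‖ ^ γ * μf u :=
    Eventually.of_forall fun u =>
      mul_nonneg (Real.rpow_nonneg (norm_nonneg _) _) (hμpos u).le
  calc m2 * m * (volume (closedBall (0 : EuclideanSpace ℝ (Fin 3)) 1)).toReal * (1 + s) ^ γ
      = (volume (closedBall w 1)).toReal • (m2 * (1 + s) ^ γ * m) := by
        rw [Measure.addHaar_closedBall_center volume w, smul_eq_mul]
        ring
    _ = ∫ _u in closedBall w 1, (m2 * (1 + s) ^ γ * m) := (setIntegral_const _).symm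
    _ ≤ ∫ u in closedBall w 1, ‖v - u‖ ^ γ * μf u := by
        apply setIntegral_mono_on
        · exact integrableOn_const measure_closedBall_lt_top.ne
        · exact hintf.integrableOn
        · exact measurableSet_closedBall
        · exact hflow
    _ ≤ ∫ u, ‖v - u‖ ^ γ * μf u := setIntegral_le_integral hintf hfnn
end lowersec

section uppersec
open MeasureTheory Real Metric Set Filter
variable (γ ρ T : ℝ) (𝔲 : EuclideanSpace ℝ (Fin 3))

set_option maxHeartbeats 1000000 in
lemma nu_upper (hγ1 : -3 < γ) (hγ2 : γ ≤ 1) (hρ : 0 < ρ) (hT : 0 < T) :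
    ∃ C : ℝ, 0 ≤ C ∧ ∀ v : EuclideanSpace ℝ (Fin 3),
      (∫ u : EuclideanSpace ℝ (Fin 3),
        ‖v - u‖ ^ γ * (ρ * (2 * π * T) ^ (-(3:ℝ) / 2) * Real.exp (-‖u - 𝔲‖ ^ 2 / (2 * T))))
        ≤ C * (1 + ‖v‖) ^ γ := by
  set a : ℝ := ρ * (2 * π * T) ^ (-(3:ℝ) / 2) with ha
  have hapos : 0 < a := by
    apply mul_pos hρ
    apply Real.rpow_pos_of_pos
    have := Real.pi_pos
    positivity
  set μf : EuclideanSpace ℝ (Fin 3) → ℝ := fun u => a * Real.exp (-‖u - 𝔲‖ ^ 2 / (2 * T))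
    with hμf
  have hμpos : ∀ u, 0 < μf u := fun u => mul_pos hapos (Real.exp_pos _)
  have hg : Integrable (fun u : EuclideanSpace ℝ (Fin 3) => (1 + ‖u‖) * μf u) volume :=
    gauss_majorant ρ T 𝔲 hρ hT
  have hμmeas : Measurable μf := by fun_prop
  have hμint : Integrable μf volume := by
    apply hg.mono' hμmeas.aestronglyMeasurable
    refine Eventually.of_forall fun u => ?_
    rw [Real.norm_of_nonneg (hμpos u).le]
    nlinarith [hμpos u, norm_nonneg u]
  have hfint : ∀ v : EuclideanSpace ℝ (Fin 3),
      Integrable (fun u => ‖v - u‖ ^ γ * μf u) volume :=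
    fun v => nu_integrable γ ρ T 𝔲 hγ1 hγ2 hρ hT v
  rcases lt_or_ge γ 0 with hγ0 | hγ0
  · -- singular case
    obtain ⟨J, hJ0, hJ⟩ := rpow_ball_bound γ hγ1 hγ0
    obtain ⟨K6, hK6pos, hK6⟩ := polyExpBound T hT (1 + 2 * ‖𝔲‖) (by positivity) 6
    set M0 : ℝ := ∫ u, μf u with hM0
    have hM0nn : 0 ≤ M0 := integral_nonneg fun u => (hμpos u).le
    set B1 : ℝ := (volume (ball (0 : EuclideanSpace ℝ (Fin 3)) 1)).toReal with hB1
    have hB1nn : 0 ≤ B1 := ENNReal.toReal_nonneg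
    refine ⟨a * (J + B1) * K6 + (2:ℝ) ^ (-γ) * M0, by positivity, fun v => ?_⟩
    set s : ℝ := ‖v‖ with hs
    have hs0 : 0 ≤ s := norm_nonneg v
    have h1s : (1:ℝ) ≤ 1 + s := by linarith
    set r : ℝ := (1 + s) / 2 with hr
    have hrpos : 0 < r := by rw [hr]; linarith
    have hsplit : (∫ u, ‖v - u‖ ^ γ * μf u) =
        (∫ u in ball v r, ‖v - u‖ ^ γ * μf u) + ∫ u in (ball v r)ᶜ, ‖v - u‖ ^ γ * μf u :=
      (integral_add_compl measurableSet_ball (hfint v)).symm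
    -- far bound
    have hfar : (∫ u in (ball v r)ᶜ, ‖v - u‖ ^ γ * μf u) ≤ (2:ℝ) ^ (-γ) * M0 * (1 + s) ^ γ := by
      have step1 : (∫ u in (ball v r)ᶜ, ‖v - u‖ ^ γ * μf u) ≤
          ∫ u in (ball v r)ᶜ, r ^ γ * μf u := by
        apply setIntegral_mono_on (hfint v).integrableOn
          (hμint.const_mul _).integrableOn measurableSet_ball.compl
        intro u hu
        have hd : r ≤ ‖v - u‖ := by
          simp only [mem_compl_iff, mem_ball, not_lt] at hu
          calc r ≤ dist u v := hu
            _ = ‖v - u‖ := by rw [dist_comm, dist_eq_norm]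
        exact mul_le_mul_of_nonneg_right
          (Real.rpow_le_rpow_of_nonpos hrpos hd hγ0.le) (hμpos u).le
      have step2 : (∫ u in (ball v r)ᶜ, r ^ γ * μf u) = r ^ γ * ∫ u in (ball v r)ᶜ, μf u :=
        integral_const_mul _ _
      have step3 : (∫ u in (ball v r)ᶜ, μf u) ≤ M0 :=
        setIntegral_le_integral hμint (Eventually.of_forall fun u => (hμpos u).le)
      have step4 : r ^ γ = (2:ℝ) ^ (-γ) * (1 + s) ^ γ := by
        rw [hr, div_eq_mul_inv, Real.mul_rpow (by linarith) (by norm_num),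
          Real.inv_rpow (by norm_num), ← Real.rpow_neg (by norm_num)]
        ring
      calc (∫ u in (ball v r)ᶜ, ‖v - u‖ ^ γ * μf u)
          ≤ r ^ γ * ∫ u in (ball v r)ᶜ, μf u := by rw [← step2]; exact step1
        _ ≤ r ^ γ * M0 := by
            apply mul_le_mul_of_nonneg_left step3 (Real.rpow_nonneg hrpos.le _)
        _ = (2:ℝ) ^ (-γ) * M0 * (1 + s) ^ γ := by rw [step4]; ring
    -- near bound
    have hgmeas : Measurable (fun u : EuclideanSpace ℝ (Fin 3) => ‖v - u‖ ^ γ) := by fun_prop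
    have hdiffint : IntegrableOn (fun u => ‖v - u‖ ^ γ) (ball v r \ ball v 1) volume := by
      apply Measure.integrableOn_of_bounded (M := 1)
        (ne_top_of_le_ne_top measure_ball_lt_top.ne (measure_mono diff_subset))
        hgmeas.aestronglyMeasurable
      rw [ae_restrict_iff' (measurableSet_ball.diff measurableSet_ball)]
      refine Eventually.of_forall fun u hu => ?_
      have hd : (1:ℝ) ≤ ‖v - u‖ := by
        have := hu.2
        simp only [mem_ball, not_lt] at this
        calc (1:ℝ) ≤ dist u v := this
          _ = ‖v - u‖ := by rw [dist_comm, dist_eq_norm]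
      rw [Real.norm_of_nonneg (Real.rpow_nonneg (norm_nonneg _) _)]
      exact Real.rpow_le_one_of_one_le_of_nonpos hd hγ0.le
    have hunion : IntegrableOn (fun u => ‖v - u‖ ^ γ)
        (ball v 1 ∪ (ball v r \ ball v 1)) volume := (hJ v).1.union hdiffint
    have hsubset : ball v r ⊆ ball v 1 ∪ (ball v r \ ball v 1) := by
      intro u hu
      by_cases h : u ∈ ball v 1
      · exact Or.inl h
      · exact Or.inr ⟨hu, h⟩
    have hgball : IntegrableOn (fun u => ‖v - u‖ ^ γ) (ball v r) volume :=
      hunion.mono_set hsubset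
    set Ev : ℝ := Real.exp (-(max 0 ((s - (1 + 2 * ‖𝔲‖)) / 2)) ^ 2 / (2 * T)) with hEv
    have hEvpos : 0 < Ev := Real.exp_pos _
    have hμball : ∀ u ∈ ball v r, μf u ≤ a * Ev := by
      intro u hu
      have hvu : ‖v - u‖ < r := by
        rw [mem_ball, dist_comm, dist_eq_norm] at hu
        exact hu
      have htri : ‖v - 𝔲‖ ≤ ‖v - u‖ + ‖u - 𝔲‖ := by
        calc ‖v - 𝔲‖ = ‖(v - u) + (u - 𝔲)‖ := by abel_nf
          _ ≤ ‖v - u‖ + ‖u - 𝔲‖ := norm_add_le _ _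
      have hlow : s - ‖𝔲‖ ≤ ‖v - 𝔲‖ := by
        have := norm_sub_norm_le v 𝔲
        rw [← hs] at this
        linarith
      have hkey : max 0 ((s - (1 + 2 * ‖𝔲‖)) / 2) ≤ ‖u - 𝔲‖ := by
        apply max_le (norm_nonneg _)
        rw [hr] at hvu
        linarith
      exact mul_le_mul_of_nonneg_left (expMono hT (le_max_left _ _) hkey) hapos.le
    have hnear1 : (∫ u in ball v r, ‖v - u‖ ^ γ * μf u) ≤
        (a * Ev) * ∫ u in ball v r, ‖v - u‖ ^ γ := by
      rw [← integral_const_mul]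
      apply setIntegral_mono_on (hfint v).integrableOn (hgball.const_mul _) measurableSet_ball
      intro u hu
      calc ‖v - u‖ ^ γ * μf u ≤ ‖v - u‖ ^ γ * (a * Ev) :=
            mul_le_mul_of_nonneg_left (hμball u hu) (Real.rpow_nonneg (norm_nonneg _) _)
        _ = (a * Ev) * ‖v - u‖ ^ γ := mul_comm _ _
    have hnear2 : (∫ u in ball v r, ‖v - u‖ ^ γ) ≤ J + B1 * r ^ (3:ℕ) := by
      have hnnae : 0 ≤ᶠ[ae (volume.restrict (ball v 1 ∪ (ball v r \ ball v 1)))]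
          fun u : EuclideanSpace ℝ (Fin 3) => ‖v - u‖ ^ γ :=
        Eventually.of_forall fun u => Real.rpow_nonneg (norm_nonneg _) _
      have hsp : (∫ u in ball v r, ‖v - u‖ ^ γ) ≤
          ∫ u in ball v 1 ∪ (ball v r \ ball v 1), ‖v - u‖ ^ γ :=
        setIntegral_mono_set hunion hnnae (HasSubset.Subset.eventuallyLE hsubset)
      have hun : (∫ u in ball v 1 ∪ (ball v r \ ball v 1), ‖v - u‖ ^ γ) =
          (∫ u in ball v 1, ‖v - u‖ ^ γ) + ∫ u in ball v r \ ball v 1, ‖v - u‖ ^ γ :=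
        setIntegral_union disjoint_sdiff_right (measurableSet_ball.diff measurableSet_ball)
          (hJ v).1 hdiffint
      have hd1 : (∫ u in ball v r \ ball v 1, ‖v - u‖ ^ γ) ≤ B1 * r ^ (3:ℕ) := by
        have hb : (∫ u in ball v r \ ball v 1, ‖v - u‖ ^ γ) ≤
            ∫ _u in ball v r \ ball v 1, (1:ℝ) := by
          apply setIntegral_mono_on hdiffint
            (integrableOn_const
              (lt_of_le_of_lt (measure_mono diff_subset) measure_ball_lt_top).ne)
            (measurableSet_ball.diff measurableSet_ball)
          intro u hu
          have : (1:ℝ) ≤ ‖v - u‖ := by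
            have h2 := hu.2
            simp only [mem_ball, not_lt] at h2
            calc (1:ℝ) ≤ dist u v := h2
              _ = ‖v - u‖ := by rw [dist_comm, dist_eq_norm]
          exact Real.rpow_le_one_of_one_le_of_nonpos this hγ0.le
        have hc : (∫ _u in ball v r \ ball v 1, (1:ℝ)) =
            (volume (ball v r \ ball v 1)).toReal := by
          rw [setIntegral_const, smul_eq_mul, mul_one, Measure.real]
        have hvol : (volume (ball v r \ ball v 1)).toReal ≤ (volume (ball v r)).toReal :=
          ENNReal.toReal_mono measure_ball_lt_top.ne (measure_mono diff_subset)
        have hvolval : (volume (ball v r)).toReal = r ^ (3:ℕ) * B1 := by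
          rw [volume.addHaar_ball v hrpos.le, ENNReal.toReal_mul, ENNReal.toReal_ofReal
            (by positivity), ← hB1]
          norm_num [show Module.finrank ℝ (EuclideanSpace ℝ (Fin 3)) = 3 from by simp]
        calc (∫ u in ball v r \ ball v 1, ‖v - u‖ ^ γ) ≤ (volume (ball v r \ ball v 1)).toReal := by
              rw [← hc]; exact hb
          _ ≤ r ^ (3:ℕ) * B1 := by rw [← hvolval]; exact hvol
          _ = B1 * r ^ (3:ℕ) := mul_comm _ _
      calc (∫ u in ball v r, ‖v - u‖ ^ γ)
          ≤ (∫ u in ball v 1, ‖v - u‖ ^ γ) + ∫ u in ball v r \ ball v 1, ‖v - u‖ ^ γ := by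
            rw [← hun]; exact hsp
        _ ≤ J + B1 * r ^ (3:ℕ) := add_le_add (hJ v).2 hd1
    -- combine near
    have hnear3 : (a * Ev) * (J + B1 * r ^ (3:ℕ)) ≤ a * (J + B1) * K6 * (1 + s) ^ γ := by
      have hr3 : r ^ (3:ℕ) ≤ (1 + s) ^ (3:ℕ) := by
        apply pow_le_pow_left₀ hrpos.le
        rw [hr]; linarith
      have hone : (1:ℝ) ≤ (1 + s) ^ (3:ℕ) := by
        have := pow_le_pow_left₀ zero_le_one h1s 3
        simpa using this
      have hJB : J + B1 * r ^ (3:ℕ) ≤ (J + B1) * (1 + s) ^ (3:ℕ) := by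
        have h1 : J ≤ J * (1 + s) ^ (3:ℕ) := le_mul_of_one_le_right hJ0 hone
        have h2 : B1 * r ^ (3:ℕ) ≤ B1 * (1 + s) ^ (3:ℕ) :=
          mul_le_mul_of_nonneg_left hr3 hB1nn
        nlinarith
      have hpow6 : (1 + s) ^ (3:ℕ) * Ev ≤ K6 * (1 + s) ^ γ := by
        have hcancel : ((1 + s):ℝ) ^ (-γ) * (1 + s) ^ γ = 1 := by
          rw [← Real.rpow_add (by linarith), neg_add_cancel, Real.rpow_zero]
        have hup : ((1 + s):ℝ) ^ ((3:ℕ):ℝ) * (1 + s) ^ (-γ) ≤ (1 + s) ^ ((6:ℕ):ℝ) := by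
          rw [← Real.rpow_add (by linarith)]
          apply Real.rpow_le_rpow_of_exponent_le h1s
          push_cast
          linarith
        have hup' : ((1 + s):ℝ) ^ (3:ℕ) * (1 + s) ^ (-γ) ≤ (1 + s) ^ (6:ℕ) := by
          rw [← Real.rpow_natCast (1 + s) 3, ← Real.rpow_natCast (1 + s) 6]
          exact hup
        have h6 : ((1 + s):ℝ) ^ (6:ℕ) * Ev ≤ K6 := hK6 s hs0
        calc ((1 + s):ℝ) ^ (3:ℕ) * Ev
            = (((1 + s):ℝ) ^ (3:ℕ) * (1 + s) ^ (-γ) * Ev) * (1 + s) ^ γ := by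
              rw [show (((1 + s):ℝ) ^ (3:ℕ) * (1 + s) ^ (-γ) * Ev) * (1 + s) ^ γ =
                ((1 + s):ℝ) ^ (3:ℕ) * Ev * ((1 + s) ^ (-γ) * (1 + s) ^ γ) by ring, hcancel,
                mul_one]
          _ ≤ ((1 + s) ^ (6:ℕ) * Ev) * (1 + s) ^ γ := by
              apply mul_le_mul_of_nonneg_right _ (Real.rpow_nonneg (by linarith) _)
              exact mul_le_mul_of_nonneg_right hup' hEvpos.le
          _ ≤ K6 * (1 + s) ^ γ := by
              apply mul_le_mul_of_nonneg_right h6 (Real.rpow_nonneg (by linarith) _)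
      calc (a * Ev) * (J + B1 * r ^ (3:ℕ))
          ≤ (a * Ev) * ((J + B1) * (1 + s) ^ (3:ℕ)) := by
            apply mul_le_mul_of_nonneg_left hJB (by positivity)
        _ = (a * (J + B1)) * ((1 + s) ^ (3:ℕ) * Ev) := by ring
        _ ≤ (a * (J + B1)) * (K6 * (1 + s) ^ γ) := by
            apply mul_le_mul_of_nonneg_left hpow6 (by positivity)
        _ = a * (J + B1) * K6 * (1 + s) ^ γ := by ring
    -- total
    rw [hsplit]
    have hnear : (∫ u in ball v r, ‖v - u‖ ^ γ * μf u) ≤ a * (J + B1) * K6 * (1 + s) ^ γ := by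
      calc (∫ u in ball v r, ‖v - u‖ ^ γ * μf u)
          ≤ (a * Ev) * ∫ u in ball v r, ‖v - u‖ ^ γ := hnear1
        _ ≤ (a * Ev) * (J + B1 * r ^ (3:ℕ)) := by
            apply mul_le_mul_of_nonneg_left hnear2 (by positivity)
        _ ≤ a * (J + B1) * K6 * (1 + s) ^ γ := hnear3
    calc (∫ u in ball v r, ‖v - u‖ ^ γ * μf u) + ∫ u in (ball v r)ᶜ, ‖v - u‖ ^ γ * μf u
        ≤ a * (J + B1) * K6 * (1 + s) ^ γ + (2:ℝ) ^ (-γ) * M0 * (1 + s) ^ γ :=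
          add_le_add hnear hfar
      _ = (a * (J + B1) * K6 + (2:ℝ) ^ (-γ) * M0) * (1 + s) ^ γ := by ring
  · -- mild case
    set M1 : ℝ := ∫ u, (1 + ‖u‖) * μf u with hM1
    have hM1nn : 0 ≤ M1 :=
      integral_nonneg fun u => mul_nonneg (by positivity) (hμpos u).le
    refine ⟨M1, hM1nn, fun v => ?_⟩
    have hmono : (∫ u, ‖v - u‖ ^ γ * μf u) ≤
        ∫ u, (1 + ‖v‖) ^ γ * ((1 + ‖u‖) * μf u) := by
      apply integral_mono (hfint v) (hg.const_mul _)
      intro u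
      have key : ‖v - u‖ ^ γ ≤ (1 + ‖v‖) ^ γ * (1 + ‖u‖) ^ γ := by
        rw [← Real.mul_rpow (by positivity) (by positivity)]
        apply Real.rpow_le_rpow (norm_nonneg _) _ hγ0
        have := norm_sub_le v u
        nlinarith [norm_nonneg v, norm_nonneg u]
      have h2 : (1 + ‖u‖) ^ γ ≤ 1 + ‖u‖ := by
        nth_rewrite 2 [← Real.rpow_one (1 + ‖u‖)]
        apply Real.rpow_le_rpow_of_exponent_le (by linarith [norm_nonneg u]) hγ2
      calc ‖v - u‖ ^ γ * μf u ≤ ((1 + ‖v‖) ^ γ * (1 + ‖u‖) ^ γ) * μf u :=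
            mul_le_mul_of_nonneg_right key (hμpos u).le
        _ ≤ (1 + ‖v‖) ^ γ * ((1 + ‖u‖) * μf u) := by
            rw [mul_assoc]
            apply mul_le_mul_of_nonneg_left _ (Real.rpow_nonneg (by positivity) _)
            apply mul_le_mul_of_nonneg_right h2 (hμpos u).le
    calc (∫ u, ‖v - u‖ ^ γ * μf u) ≤ ∫ u, (1 + ‖v‖) ^ γ * ((1 + ‖u‖) * μf u) := hmono
      _ = (1 + ‖v‖) ^ γ * M1 := integral_const_mul _ _
      _ = M1 * (1 + ‖v‖) ^ γ := mul_comm _ _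
end uppersec


open MeasureTheory Real

theorem collision_frequency_asymptotics (γ ρ T : ℝ) (𝔲 : EuclideanSpace ℝ (Fin 3))
    (hγ1 : -3 < γ) (hγ2 : γ ≤ 1) (hρ : 0 < ρ) (hT : 0 < T)
    (μ ν : EuclideanSpace ℝ (Fin 3) → ℝ)
    (hμ : ∀ u, μ u = ρ * (2 * π * T) ^ (-(3 : ℝ) / 2) * Real.exp (-‖u - 𝔲‖ ^ 2 / (2 * T)))
    (hν : ∀ v, ν v = ∫ u, ‖v - u‖ ^ γ * μ u) :
    ∃ c C : ℝ, 0 < c ∧ c ≤ C ∧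
      ∀ v, c * (1 + ‖v‖) ^ γ ≤ ν v ∧ ν v ≤ C * (1 + ‖v‖) ^ γ := by
  obtain ⟨c, hcpos, hc⟩ := nu_lower γ ρ T 𝔲 hγ1 hγ2 hρ hT
  obtain ⟨Cu, hCu0, hCu⟩ := nu_upper γ ρ T 𝔲 hγ1 hγ2 hρ hT
  refine ⟨c, max c Cu, hcpos, le_max_left _ _, fun v => ?_⟩
  have hνv : ν v = ∫ u, ‖v - u‖ ^ γ *
      (ρ * (2 * π * T) ^ (-(3 : ℝ) / 2) * Real.exp (-‖u - 𝔲‖ ^ 2 / (2 * T))) := by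
    rw [hν v]
    congr 1
    funext u
    rw [hμ u]
  constructor
  · rw [hνv]
    exact hc v
  · rw [hνv]
    refine (hCu v).trans ?_
    apply mul_le_mul_of_nonneg_right (le_max_right _ _)
    exact Real.rpow_nonneg (by positivity) _
end

section
/- Let l : ℝ³×ℝ³ → ℝ satisfy |l(v,v')| ≤ C exp(-c|v-v'|²) / (|v-v'| (1+|v|+|v'|)^{1-γ}) with c > 0, C > 0 and -3 < γ ≤ 1. Then there is a constant C' such that ∫_{ℝ³} |l(v,v')| dv' ≤ C' (1+|v|)^{γ-1} for all v ∈ ℝ³; in particular ∫ |l(v,v')| dv' ≤ C'' (1+|v|)^γ. -/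
open MeasureTheory Real Set Metric

local notation "E3" => EuclideanSpace ℝ (Fin 3)

lemma key_integrable {c : ℝ} (hc : 0 < c) :
    Integrable (fun x : E3 => Real.exp (-c * ‖x‖ ^ 2) / ‖x‖) := by
  set f : ℝ → ℝ := fun r => Real.exp (-c * r ^ 2) / r with hf
  have hfm : Measurable f := by fun_prop
  have hdim : Module.finrank ℝ E3 = 3 := by simp
  have hs : MeasurableSet ({0}ᶜ : Set E3) := (measurableSet_singleton _).compl
  have h1 : Integrable (fun x : E3 => f ‖x‖) ↔
      Integrable ((fun x : E3 => f ‖x‖) ∘ (Subtype.val : ({0}ᶜ : Set E3) → E3))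
        ((volume : Measure E3).comap Subtype.val) := by
    rw [← (MeasurableEmbedding.subtype_coe hs).integrable_map_iff,
      map_comap_subtype_coe hs, ← IntegrableOn, IntegrableOn,
      restrict_compl_singleton]
  rw [show (fun x : E3 => Real.exp (-c * ‖x‖ ^ 2) / ‖x‖) = fun x : E3 => f ‖x‖ from rfl, h1]
  have hmp := MeasureTheory.Measure.measurePreserving_homeomorphUnitSphereProd
    (volume : Measure E3)
  have h2 := hmp.integrable_comp_emb (Homeomorph.measurableEmbedding _)
    (g := fun p : sphere (0 : E3) 1 × Ioi (0 : ℝ) => f p.2.1)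
  rw [show ((fun x : E3 => f ‖x‖) ∘ (Subtype.val : ({0}ᶜ : Set E3) → E3)) =
      (fun p : sphere (0 : E3) 1 × Ioi (0 : ℝ) => f p.2.1) ∘
        (homeomorphUnitSphereProd E3) from by ext x; simp, h2]
  have hD : Integrable (fun y : Ioi (0 : ℝ) => f y.1)
      (MeasureTheory.Measure.volumeIoiPow (Module.finrank ℝ E3 - 1)) := by
    rw [hdim]
    unfold MeasureTheory.Measure.volumeIoiPow
    rw [integrable_withDensity_iff (by fun_prop) (.of_forall fun _ => ENNReal.ofReal_lt_top)]
    have h3 : Integrable ((fun r : ℝ => f r * r ^ (3 - 1 : ℕ)) ∘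
        (Subtype.val : Ioi (0:ℝ) → ℝ)) ((volume : Measure ℝ).comap Subtype.val) := by
      rw [← (MeasurableEmbedding.subtype_coe measurableSet_Ioi).integrable_map_iff,
        map_comap_subtype_coe measurableSet_Ioi, ← IntegrableOn]
      have h4 := integrableOn_rpow_mul_exp_neg_mul_sq hc (by norm_num : (-1:ℝ) < 1)
      refine h4.congr_fun (fun r hr => ?_) measurableSet_Ioi
      have hr0 : (0:ℝ) < r := hr
      simp only [hf]
      rw [Real.rpow_one]
      field_simp
    refine h3.congr (Filter.Eventually.of_forall fun y => ?_)
    simp only [Function.comp_apply, ENNReal.toReal_ofReal (pow_nonneg (le_of_lt y.2) _)]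
  refine (integrable_prod_iff ?_).2 ⟨Filter.Eventually.of_forall fun _ => hD, ?_⟩
  · exact (((hfm.comp measurable_subtype_coe).comp measurable_snd).stronglyMeasurable).aestronglyMeasurable
  · simpa using integrable_const (μ := volume.toSphere (E := E3))
      (∫ y : Ioi (0:ℝ), ‖f y.1‖ ∂(MeasureTheory.Measure.volumeIoiPow (Module.finrank ℝ E3 - 1)))

theorem kernel_integral_decay (γ c C : ℝ) (hγ1 : -3 < γ) (hγ2 : γ ≤ 1)
    (hc : 0 < c) (hC : 0 < C)
    (l : EuclideanSpace ℝ (Fin 3) → EuclideanSpace ℝ (Fin 3) → ℝ)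
    (hl : ∀ v v', |l v v'| ≤
      C * Real.exp (-c * ‖v - v'‖ ^ 2) / (‖v - v'‖ * (1 + ‖v‖ + ‖v'‖) ^ (1 - γ))) :
    ∃ C' > (0 : ℝ), (∀ v, (∫ v', |l v v'|) ≤ C' * (1 + ‖v‖) ^ (γ - 1)) ∧
      ∃ C'' > (0 : ℝ), ∀ v, (∫ v', |l v v'|) ≤ C'' * (1 + ‖v‖) ^ γ := by
  set K : ℝ := ∫ w : EuclideanSpace ℝ (Fin 3), Real.exp (-c * ‖w‖ ^ 2) / ‖w‖ with hK
  have hK0 : 0 ≤ K := integral_nonneg fun w => by positivity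
  have main : ∀ v, (∫ v', |l v v'|) ≤ C * K * (1 + ‖v‖) ^ (γ - 1) := by
    intro v
    have hb : (0:ℝ) < 1 + ‖v‖ := by positivity
    have hbr : (0:ℝ) < (1 + ‖v‖) ^ (γ - 1) := Real.rpow_pos_of_pos hb _
    set G : EuclideanSpace ℝ (Fin 3) → ℝ :=
      fun v' => C * (1 + ‖v‖) ^ (γ - 1) * (Real.exp (-c * ‖v - v'‖ ^ 2) / ‖v - v'‖) with hG
    have hGint : Integrable G := ((key_integrable hc).comp_sub_left v).const_mul _
    have hpt : ∀ v', |l v v'| ≤ G v' := by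
      intro v'
      rcases eq_or_ne ‖v - v'‖ 0 with hr | hr
      · have h0 := hl v v'
        rw [hr, zero_mul, div_zero] at h0
        have hGz : G v' = 0 := by simp [hG, hr]
        rw [hGz]; exact h0
      · have hrpos : (0:ℝ) < ‖v - v'‖ := lt_of_le_of_ne (norm_nonneg _) (Ne.symm hr)
        have hBpos : (0:ℝ) < (1 + ‖v‖) ^ (1 - γ) := Real.rpow_pos_of_pos hb _
        have hle : (1 + ‖v‖) ^ (1 - γ) ≤ (1 + ‖v‖ + ‖v'‖) ^ (1 - γ) :=
          Real.rpow_le_rpow hb.le (by linarith [norm_nonneg v']) (by linarith)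
        have h1 : C * Real.exp (-c * ‖v - v'‖ ^ 2) / (‖v - v'‖ * (1 + ‖v‖ + ‖v'‖) ^ (1 - γ)) ≤
            C * Real.exp (-c * ‖v - v'‖ ^ 2) / (‖v - v'‖ * (1 + ‖v‖) ^ (1 - γ)) :=
          div_le_div_of_nonneg_left (by positivity) (by positivity)
            (by exact mul_le_mul_of_nonneg_left hle hrpos.le)
        refine (hl v v').trans (h1.trans (le_of_eq ?_))
        rw [hG]
        have : (1 + ‖v‖) ^ (γ - 1) = ((1 + ‖v‖) ^ (1 - γ))⁻¹ := by
          rw [show γ - 1 = -(1 - γ) by ring, Real.rpow_neg hb.le]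
        rw [this]
        field_simp
    have hInt : (∫ v', |l v v'|) ≤ ∫ v', G v' :=
      integral_mono_of_nonneg (Filter.Eventually.of_forall fun v' => abs_nonneg _)
        hGint (Filter.Eventually.of_forall hpt)
    refine hInt.trans (le_of_eq ?_)
    rw [hG]
    simp only []
    rw [MeasureTheory.integral_const_mul, integral_sub_left_eq_self
      (fun w : EuclideanSpace ℝ (Fin 3) => Real.exp (-c * ‖w‖ ^ 2) / ‖w‖) volume v, ← hK]
    ring
  refine ⟨C * K + 1, by positivity, fun v => ?_, C * K + 1, by positivity, fun v => ?_⟩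
  · exact (main v).trans (mul_le_mul_of_nonneg_right (le_add_of_nonneg_right zero_le_one)
      (Real.rpow_pos_of_pos (by positivity) _).le)
  · refine ((main v).trans (mul_le_mul_of_nonneg_right (le_add_of_nonneg_right zero_le_one)
      (Real.rpow_pos_of_pos (by positivity) _).le)).trans ?_
    exact mul_le_mul_of_nonneg_left
      (Real.rpow_le_rpow_of_exponent_le (by linarith [norm_nonneg v]) (by linarith))
      (by positivity)
end
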